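/- For each fixed integer m ≥ 2, a(n,m) = (log n)^m / m! + γ (log n)^{m−1} / (m−1)! + O((log n)^{m−2}) as n → ∞; that is, there exist constants C > 0 and N such that for all n ≥ N, |a(n,m) − (log n)^m / m! − γ (log n)^{m−1}/(m−1)!| ≤ C (log n)^{m−2}. -/

import Mathlib

open Finset Filter Real

noncomputable def aa (n m : ℕ) : ℝ :=
  ∑ k ∈ Finset.Icc 1 n, (n.choose k : ℝ) * (-1 : ℝ) ^ (k + 1) / (k : ℝ) ^ m

lemma aa_succ_n (n m : ℕ) :
    aa (n+1) (m+1) = aa n (m+1) + aa (n+1) m / (n+1) := by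
  have h2 : aa n (m+1)
      = ∑ k ∈ Finset.Icc 1 (n+1), (n.choose k : ℝ) * (-1 : ℝ) ^ (k + 1) / (k : ℝ) ^ (m+1) := by
    rw [aa, Finset.sum_Icc_succ_top (by omega)]
    simp [Nat.choose_succ_self]
  have key : ∀ j ∈ Finset.range (n+1),
      ((n+1).choose (1+j) : ℝ) * (-1:ℝ)^(1+j+1) / ((1+j : ℕ):ℝ)^(m+1)
        - (n.choose (1+j) : ℝ) * (-1:ℝ)^(1+j+1) / ((1+j : ℕ):ℝ)^(m+1)
      = ((n+1).choose (1+j) : ℝ) * (-1:ℝ)^(1+j+1) / ((1+j : ℕ):ℝ)^m / (↑(n+1)) := by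
    intro j hj
    have hch : ((n+1).choose (j+1) : ℝ) - (n.choose (j+1) : ℝ) = (n.choose j : ℝ) := by
      rw [Nat.choose_succ_succ]; push_cast; ring
    have hmul : ((n+1) : ℝ) * (n.choose j : ℝ) = ((n+1).choose (j+1) : ℝ) * ((j+1) : ℝ) := by
      exact_mod_cast congrArg (Nat.cast : ℕ → ℝ) (Nat.add_one_mul_choose_eq n j)
    have hj1 : ((j:ℝ)+1) ≠ 0 := by positivity
    have hn1 : ((n:ℝ)+1) ≠ 0 := by positivity
    rw [add_comm 1 j] at *
    push_cast
    rw [← sub_div, ← sub_mul, hch, div_div, div_eq_div_iff (by positivity) (by positivity)]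
    linear_combination ((-1:ℝ)^(j+1+1) * ((j:ℝ)+1)^m) * hmul
  have e1 : aa (n+1) (m+1) - aa n (m+1)
      = ∑ j ∈ Finset.range (n+1),
        (((n+1).choose (1+j) : ℝ) * (-1:ℝ)^(1+j+1) / ((1+j : ℕ):ℝ)^(m+1)
          - (n.choose (1+j) : ℝ) * (-1:ℝ)^(1+j+1) / ((1+j : ℕ):ℝ)^(m+1)) := by
    rw [aa, h2, ← Finset.sum_sub_distrib, ← Finset.Ico_add_one_right_eq_Icc, Finset.sum_Ico_eq_sum_range]
    norm_num
  have e2 : aa (n+1) m / (↑(n+1))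
      = ∑ j ∈ Finset.range (n+1),
        ((n+1).choose (1+j) : ℝ) * (-1:ℝ)^(1+j+1) / ((1+j : ℕ):ℝ)^m / (↑(n+1)) := by
    rw [aa, ← Finset.Ico_add_one_right_eq_Icc, Finset.sum_Ico_eq_sum_range, Finset.sum_div]
    norm_num
  have h := Finset.sum_congr rfl key
  have key2 := e1.trans (h.trans e2.symm)
  push_cast at key2
  linarith

lemma aa_rec (n m : ℕ) : aa n (m+1) = ∑ k ∈ Finset.Icc 1 n, aa k m / k := by
  induction n with
  | zero => simp [aa]
  | succ n ih =>
      rw [Finset.sum_Icc_succ_top (by omega), ← ih, aa_succ_n]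
      push_cast; ring

lemma aa_zero_m (n : ℕ) (hn : 1 ≤ n) : aa n 0 = 1 := by
  have h := Int.alternating_sum_range_choose (n := n)
  rw [if_neg (by omega)] at h
  have h' : ((∑ i ∈ Finset.range (n + 1), (-1 : ℤ) ^ i * n.choose i : ℤ) : ℝ) = 0 := by
    rw [h]; norm_num
  push_cast at h'
  rw [Finset.sum_range_succ'] at h'
  simp only [pow_zero, one_mul, Nat.choose_zero_right, Nat.cast_one] at h'
  have e : aa n 0 = ∑ k ∈ Finset.range n, (-1:ℝ)^(k+1) * n.choose (k+1) * (-1) := by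
    rw [aa, ← Finset.Ico_add_one_right_eq_Icc, Finset.sum_Ico_eq_sum_range]
    apply Finset.sum_congr (by norm_num)
    intro k _
    rw [add_comm 1 k, pow_zero, pow_succ]
    ring
  rw [e, ← Finset.sum_mul]
  have : ∑ k ∈ Finset.range n, (-1:ℝ)^(k+1) * n.choose (k+1) = -1 := by linarith
  rw [this]; ring

lemma harm_eq (n : ℕ) : (harmonic n : ℝ) = ∑ k ∈ Finset.Icc 1 n, (1 : ℝ) / k := by
  rw [harmonic, ← Finset.Ico_add_one_right_eq_Icc, Finset.sum_Ico_eq_sum_range]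
  push_cast
  norm_num [add_comm]

lemma harm_bound (n : ℕ) (hn : 1 ≤ n) :
    |(harmonic n : ℝ) - Real.log n - Real.eulerMascheroniConstant| ≤ 1 / n := by
  have hn0 : (0:ℝ) < n := by exact_mod_cast hn
  have h1 : Real.eulerMascheroniConstant < (harmonic n : ℝ) - Real.log n := by
    have := Real.eulerMascheroniConstant_lt_eulerMascheroniSeq' n
    rwa [Real.eulerMascheroniSeq', if_neg (by omega)] at this
  have h2 : (harmonic n : ℝ) - Real.log (n+1) < Real.eulerMascheroniConstant := by
    have := Real.eulerMascheroniSeq_lt_eulerMascheroniConstant n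
    rwa [Real.eulerMascheroniSeq] at this
  have h3 : Real.log (n+1) - Real.log n ≤ 1 / n := by
    rw [← Real.log_div (by positivity) (by positivity)]
    have := Real.log_le_sub_one_of_pos (x := ((n:ℝ)+1)/n) (by positivity)
    have e : ((n:ℝ)+1)/n - 1 = 1/n := by field_simp; ring
    linarith
  rw [abs_le]
  constructor <;> nlinarith

-- the function
noncomputable def ff (j : ℕ) (x : ℝ) : ℝ := (Real.log x) ^ j / x

lemma ff_nonneg (j : ℕ) (x : ℝ) (hx : 1 ≤ x) : 0 ≤ ff j x := by
  have := Real.log_nonneg hx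
  have : (0:ℝ) ≤ (Real.log x)^j := by positivity
  have hx0 : (0:ℝ) ≤ x := by linarith
  exact div_nonneg this hx0

lemma ff_hasDeriv (j : ℕ) (x : ℝ) (hx : 0 < x) :
    HasDerivAt (ff j) ((j * (Real.log x)^(j-1) * x⁻¹ * x - (Real.log x)^j * 1) / x ^ 2) x := by
  have h1 : HasDerivAt (fun x : ℝ => (Real.log x) ^ j) ((j:ℝ) * (Real.log x)^(j-1) * x⁻¹) x :=
    (Real.hasDerivAt_log hx.ne').pow j
  have h2 : HasDerivAt (fun x : ℝ => x) 1 x := hasDerivAt_id x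
  exact h1.div h2 hx.ne'

lemma ff_antitoneOn (j : ℕ) {s : Set ℝ} (hs : Convex ℝ s)
    (hsub : s ⊆ Set.Ici (Real.exp (j+1))) : AntitoneOn (ff j) s := by
  have hkey : ∀ x ∈ s, 0 < x ∧ (j:ℝ) + 1 ≤ Real.log x := by
    intro x hx
    have h1 : Real.exp (j+1) ≤ x := hsub hx
    have h2 : (0:ℝ) < x := lt_of_lt_of_le (Real.exp_pos _) h1
    refine ⟨h2, ?_⟩
    calc (j:ℝ)+1 = Real.log (Real.exp (j+1)) := by rw [Real.log_exp]
    _ ≤ Real.log x := Real.log_le_log (Real.exp_pos _) h1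
  apply antitoneOn_of_deriv_nonpos hs
  · intro x hx
    exact ((ff_hasDeriv j x (hkey x hx).1).continuousAt).continuousWithinAt
  · intro x hx
    have hx' := interior_subset hx
    exact (ff_hasDeriv j x (hkey x hx').1).differentiableAt.differentiableWithinAt
  · intro x hx
    have hx' := interior_subset hx
    obtain ⟨hx0, hlog⟩ := hkey x hx'
    rw [(ff_hasDeriv j x hx0).deriv]
    have hnum : (j:ℝ) * (Real.log x)^(j-1) * x⁻¹ * x - (Real.log x)^j * 1 ≤ 0 := by
      rw [mul_assoc, inv_mul_cancel₀ hx0.ne', mul_one, mul_one]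
      have hl1 : (1:ℝ) ≤ Real.log x := by
        have : (0:ℝ) ≤ j := Nat.cast_nonneg j
        linarith
      rcases Nat.eq_zero_or_pos j with hj | hj
      · subst hj; simp
      · have : (j:ℝ) * (Real.log x)^(j-1) ≤ Real.log x * (Real.log x)^(j-1) := by
          apply mul_le_mul_of_nonneg_right (by linarith) (by positivity)
        have hpow : Real.log x * (Real.log x)^(j-1) = (Real.log x)^j := by
          rw [← pow_succ', Nat.sub_add_cancel hj]
        linarith
    apply div_nonpos_of_nonpos_of_nonneg hnum (by positivity)

lemma ff_integral (j : ℕ) (A B : ℝ) (hA : 1 ≤ A) (hAB : A ≤ B) :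
    ∫ x in A..B, ff j x
      = (Real.log B)^(j+1) / (j+1) - (Real.log A)^(j+1) / (j+1) := by
  have hderiv : ∀ x ∈ Set.uIcc A B, HasDerivAt (fun x => (Real.log x)^(j+1) / (j+1)) (ff j x) x := by
    intro x hx
    rw [Set.uIcc_of_le hAB] at hx
    have hx0 : 0 < x := lt_of_lt_of_le (by linarith) hx.1
    have h1 : HasDerivAt (fun x : ℝ => (Real.log x) ^ (j+1))
        (((j:ℝ)+1) * (Real.log x)^(j+1-1) * x⁻¹) x := by
      exact_mod_cast (Real.hasDerivAt_log hx0.ne').pow (j+1)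
    have h2 := h1.div_const ((j:ℝ)+1)
    have he : ((j:ℝ)+1) * (Real.log x)^(j+1-1) * x⁻¹ / ((j:ℝ)+1) = ff j x := by
      have : j + 1 - 1 = j := by omega
      rw [this, ff]
      field_simp
    rw [he] at h2
    exact_mod_cast h2
  have hint : IntervalIntegrable (ff j) MeasureTheory.volume A B := by
    apply ContinuousOn.intervalIntegrable
    intro x hx
    rw [Set.uIcc_of_le hAB] at hx
    have hx0 : 0 < x := lt_of_lt_of_le (by linarith) hx.1
    exact ((ff_hasDeriv j x hx0).continuousAt).continuousWithinAt
  have := intervalIntegral.integral_eq_sub_of_hasDerivAt hderiv hint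
  rw [this]

lemma sum_log_pow_div (j : ℕ) : ∃ C : ℝ, 0 < C ∧ ∀ n : ℕ, 1 ≤ n →
    |(∑ k ∈ Finset.Icc 1 n, (Real.log k)^j / k) - (Real.log n)^(j+1)/(j+1)| ≤ C := by
  classical
  set K : ℕ := max (⌈Real.exp (j+1)⌉₊) 1 with hKdef
  have hK1 : 1 ≤ K := le_max_right _ _
  have hKexp : Real.exp (j+1) ≤ (K:ℝ) := by
    calc Real.exp (j+1) ≤ (⌈Real.exp (j+1)⌉₊ : ℝ) := Nat.le_ceil _
    _ ≤ (K:ℝ) := Nat.cast_le.mpr (le_max_left _ _)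
  have hKr1 : (1:ℝ) ≤ (K:ℝ) := by exact_mod_cast hK1
  set S0 : ℝ := ∑ k ∈ Finset.Icc 1 K, ff j k with hS0
  have hS0nonneg : 0 ≤ S0 := by
    apply Finset.sum_nonneg
    intro k hk
    have hk1 : 1 ≤ k := (Finset.mem_Icc.mp hk).1
    exact ff_nonneg j k (by exact_mod_cast hk1)
  have hffK : 0 ≤ ff j K := ff_nonneg j K hKr1
  have hlogK : 0 ≤ (Real.log K)^(j+1)/(j+1) := by
    have := Real.log_nonneg hKr1
    positivity
  refine ⟨S0 + ff j K + (Real.log K)^(j+1)/(j+1) + 1, by positivity, ?_⟩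
  intro n hn
  have hnr1 : (1:ℝ) ≤ (n:ℝ) := by exact_mod_cast hn
  -- sums as over Ioc 0
  have hIcc_Ioc : ∀ m : ℕ, Finset.Icc 1 m = Finset.Ioc 0 m := fun m => Finset.Icc_add_one_left_eq_Ioc 0 m
  rcases le_or_gt n K with hnK | hKn
  · -- small n
    have hsum_le : ∑ k ∈ Finset.Icc 1 n, (Real.log k)^j / k ≤ S0 := by
      apply Finset.sum_le_sum_of_subset_of_nonneg (Finset.Icc_subset_Icc_right hnK)
      intro k hk _
      have hk1 : 1 ≤ k := (Finset.mem_Icc.mp hk).1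
      exact ff_nonneg j k (by exact_mod_cast hk1)
    have hsum_nonneg : 0 ≤ ∑ k ∈ Finset.Icc 1 n, (Real.log k)^j / k := by
      apply Finset.sum_nonneg
      intro k hk
      have hk1 : 1 ≤ k := (Finset.mem_Icc.mp hk).1
      exact ff_nonneg j k (by exact_mod_cast hk1)
    have hT_nonneg : 0 ≤ (Real.log n)^(j+1)/(j+1) := by
      have := Real.log_nonneg hnr1; positivity
    have hT_le : (Real.log n)^(j+1)/(j+1) ≤ (Real.log K)^(j+1)/(j+1) := by
      gcongr
    rw [abs_le]
    constructor <;> linarith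
  · -- large n
    have hKn' : K ≤ n := hKn.le
    have hKnr : (K:ℝ) ≤ (n:ℝ) := by exact_mod_cast hKn'
    have hanti : AntitoneOn (ff j) (Set.Icc (K:ℝ) (n:ℝ)) := by
      apply ff_antitoneOn j (convex_Icc _ _)
      intro x hx
      exact le_trans hKexp hx.1
    have hsplit : ∑ k ∈ Finset.Icc 1 n, ff j k = S0 + ∑ k ∈ Finset.Ioc K n, ff j k := by
      rw [hS0, hIcc_Ioc, hIcc_Ioc]
      exact (Finset.sum_Ioc_consecutive _ (Nat.zero_le K) hKn').symm
    have hint := ff_integral j K n hKr1 hKnr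
    -- upper bound for Ioc sum
    have hre : ∑ k ∈ Finset.Ioc K n, ff j k = ∑ i ∈ Finset.Ico K n, ff j (↑(i+1)) := by
      rw [← Finset.Ico_add_one_add_one_eq_Ioc, Finset.sum_Ico_eq_sum_range, Finset.sum_Ico_eq_sum_range]
      have he : n + 1 - (K + 1) = n - K := by omega
      rw [he]
      apply Finset.sum_congr rfl
      intro i _
      have : K + 1 + i = K + i + 1 := by omega
      rw [this]
    have hupper : ∑ k ∈ Finset.Ioc K n, ff j k ≤ ∫ x in (K:ℝ)..(n:ℝ), ff j x := by
      rw [hre]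
      exact AntitoneOn.sum_le_integral_Ico hKn' hanti
    -- lower bound
    have hlow0 : (∫ x in (K:ℝ)..(n:ℝ), ff j x) ≤ ∑ k ∈ Finset.Ico K n, ff j k :=
      AntitoneOn.integral_le_sum_Ico hKn' hanti
    have hIcoIoc : ∑ k ∈ Finset.Ico K n, ff j k + ff j n = ff j K + ∑ k ∈ Finset.Ioc K n, ff j k := by
      rw [← Finset.sum_Ico_succ_top (by omega : K ≤ n), Finset.Ico_add_one_right_eq_Icc,
        Finset.Icc_eq_cons_Ioc hKn', Finset.sum_cons]
    have hffn : 0 ≤ ff j n := ff_nonneg j n hnr1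
    have hgoal : ∑ k ∈ Finset.Icc 1 n, (Real.log k)^j / k = S0 + ∑ k ∈ Finset.Ioc K n, ff j k := by
      rw [← hsplit]; rfl
    rw [hgoal, hint] at *
    rw [abs_le]
    constructor <;> linarith [hupper, hlow0, hIcoIoc]

lemma sum_inv_sq_le (n : ℕ) : ∑ k ∈ Finset.Icc 1 n, 1/(k:ℝ)^2 ≤ 2 := by
  have H : ∀ n : ℕ, 1 ≤ n → ∑ k ∈ Finset.Icc 1 n, 1/(k:ℝ)^2 ≤ 2 - 1/(n:ℝ) := by
    intro n hn
    induction n with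
    | zero => omega
    | succ m ih =>
      rcases Nat.eq_zero_or_pos m with rfl | hm
      · norm_num
      · have h2 := ih hm
        rw [Finset.sum_Icc_succ_top (by omega)]
        have hm1 : (1:ℝ) ≤ (m:ℝ) := by exact_mod_cast hm
        have h1 : 1/((m:ℝ)+1)^2 ≤ 1/(m:ℝ) - 1/((m:ℝ)+1) := by
          rw [div_sub_div _ _ (by positivity) (by positivity),
            div_le_div_iff₀ (by positivity) (by positivity)]
          nlinarith
        push_cast
        linarith
  rcases Nat.eq_zero_or_pos n with rfl | hn
  · simp
  · have h1n : (0:ℝ) ≤ 1/(n:ℝ) := by positivity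
    linarith [H n hn]

noncomputable def Em (m k : ℕ) : ℝ :=
  aa k m - (Real.log k)^m/(m.factorial : ℝ)
    - Real.eulerMascheroniConstant*(Real.log k)^(m-1)/(((m-1).factorial : ℝ))

lemma gamma_pos : 0 < Real.eulerMascheroniConstant :=
  lt_trans (by norm_num) Real.one_half_lt_eulerMascheroniConstant

lemma gamma_lt_one : Real.eulerMascheroniConstant < 1 :=
  lt_trans Real.eulerMascheroniConstant_lt_two_thirds (by norm_num)

lemma aa_one (k : ℕ) : aa k 1 = (harmonic k : ℝ) := by
  rw [show (1:ℕ) = 0+1 from rfl, aa_rec, harm_eq]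
  apply Finset.sum_congr rfl
  intro j hj
  rw [aa_zero_m j (Finset.mem_Icc.mp hj).1]

lemma base2 : ∃ C : ℝ, 0 < C ∧ ∀ n : ℕ, 3 ≤ n → |Em 2 n| ≤ C * (Real.log n)^(2-2) := by
  obtain ⟨C1, hC1, hS1⟩ := sum_log_pow_div 1
  set γ := Real.eulerMascheroniConstant with hγdef
  refine ⟨C1 + γ*(1+γ) + 2 + 1, by nlinarith [gamma_pos, gamma_lt_one, hC1], ?_⟩
  intro n hn3
  have hn1 : 1 ≤ n := by omega
  have hnr1 : (1:ℝ) ≤ (n:ℝ) := by exact_mod_cast hn1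
  have haa2 : aa n 2 = ∑ k ∈ Finset.Icc 1 n, (harmonic k : ℝ)/k := by
    rw [show (2:ℕ) = 1+1 from rfl, aa_rec]
    exact Finset.sum_congr rfl fun k _ => by rw [aa_one]
  have hdecomp : aa n 2 = (∑ k ∈ Finset.Icc 1 n, (Real.log k)^1/k)
      + γ * (harmonic n : ℝ)
      + ∑ k ∈ Finset.Icc 1 n, ((harmonic k : ℝ) - Real.log k - γ)/k := by
    rw [haa2, harm_eq, Finset.mul_sum, ← Finset.sum_add_distrib, ← Finset.sum_add_distrib]
    apply Finset.sum_congr rfl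
    intro k hk
    have hk1 : 1 ≤ k := (Finset.mem_Icc.mp hk).1
    have hk0 : ((k:ℝ)) ≠ 0 := by positivity
    field_simp
    ring
  have hT1 := hS1 n hn1
  have hHb := harm_bound n hn1
  have hεsum : |∑ k ∈ Finset.Icc 1 n, ((harmonic k : ℝ) - Real.log k - γ)/k| ≤ 2 := by
    calc |∑ k ∈ Finset.Icc 1 n, ((harmonic k : ℝ) - Real.log k - γ)/k|
        ≤ ∑ k ∈ Finset.Icc 1 n, |((harmonic k : ℝ) - Real.log k - γ)/k| :=
          Finset.abs_sum_le_sum_abs _ _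
      _ ≤ ∑ k ∈ Finset.Icc 1 n, 1/(k:ℝ)^2 := by
          apply Finset.sum_le_sum
          intro k hk
          have hk1 : 1 ≤ k := (Finset.mem_Icc.mp hk).1
          have hkr : (1:ℝ) ≤ (k:ℝ) := by exact_mod_cast hk1
          have hkpos : (0:ℝ) < (k:ℝ) := by linarith
          rw [abs_div, abs_of_pos hkpos]
          have := harm_bound k hk1
          calc |(harmonic k : ℝ) - Real.log k - γ| / k ≤ (1/(k:ℝ)) / k := by gcongr
            _ = 1/(k:ℝ)^2 := by field_simp
      _ ≤ 2 := sum_inv_sq_le n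
  have hHn : |(harmonic n : ℝ) - Real.log n| ≤ 1 + γ := by
    have hinv : 1/(n:ℝ) ≤ 1 := by
      rw [div_le_one (by linarith)]; exact hnr1
    cases' abs_le.mp hHb with hl hr
    rw [abs_le]
    constructor <;> nlinarith [gamma_pos]
  have hfact : (Nat.factorial 2 : ℝ) = 2 := by norm_num [Nat.factorial]
  have hfact1 : (Nat.factorial 1 : ℝ) = 1 := by norm_num [Nat.factorial]
  have hEm : Em 2 n = ((∑ k ∈ Finset.Icc 1 n, (Real.log k)^1/k) - (Real.log n)^(1+1)/((1:ℕ)+1))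
      + γ * ((harmonic n : ℝ) - Real.log n)
      + ∑ k ∈ Finset.Icc 1 n, ((harmonic k : ℝ) - Real.log k - γ)/k := by
    rw [Em, hdecomp, hfact, hfact1]
    push_cast
    ring
  rw [hEm, pow_zero, mul_one]
  have hγpos := gamma_pos
  calc |_| ≤ |(∑ k ∈ Finset.Icc 1 n, (Real.log k)^1/k) - (Real.log n)^(1+1)/((1:ℕ)+1)|
        + |γ * ((harmonic n : ℝ) - Real.log n)|
        + |∑ k ∈ Finset.Icc 1 n, ((harmonic k : ℝ) - Real.log k - γ)/k| := by
          exact abs_add_three _ _ _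
    _ ≤ C1 + γ*(1+γ) + 2 := by
        have h2 : |γ * ((harmonic n : ℝ) - Real.log n)| = γ * |(harmonic n : ℝ) - Real.log n| := by
          rw [abs_mul, abs_of_pos hγpos]
        rw [h2]
        have h3 : γ * |(harmonic n : ℝ) - Real.log n| ≤ γ * (1+γ) :=
          mul_le_mul_of_nonneg_left hHn hγpos.le
        push_cast at hT1 ⊢
        linarith
    _ ≤ C1 + γ*(1+γ) + 2 + 1 := by linarith

set_option maxHeartbeats 2000000 in
lemma stepm (m : ℕ) (hm : 2 ≤ m) (C : ℝ) (hC : 0 < C)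
    (hA : ∀ n : ℕ, 3 ≤ n → |Em m n| ≤ C * (Real.log n)^(m-2)) :
    ∃ C' : ℝ, 0 < C' ∧ ∀ n : ℕ, 3 ≤ n → |Em (m+1) n| ≤ C' * (Real.log n)^(m-1) := by
  obtain ⟨C2, hC2, hS2⟩ := sum_log_pow_div m
  obtain ⟨C3, hC3, hS3⟩ := sum_log_pow_div (m-1)
  obtain ⟨C4, hC4, hS4⟩ := sum_log_pow_div (m-2)
  set γ := Real.eulerMascheroniConstant with hγdef
  have hγ0 : 0 < γ := by rw [hγdef]; exact gamma_pos
  have hγ1 : γ < 1 := by rw [hγdef]; exact gamma_lt_one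
  set B : ℝ := |∑ k ∈ Finset.Ioc 0 2, Em m k / k| with hB
  have hBnn : 0 ≤ B := abs_nonneg _
  refine ⟨C2 + C3 + B + C*C4 + C + 1, by positivity, ?_⟩
  intro n hn3
  have hn1 : 1 ≤ n := by omega
  have hnr3 : (3:ℝ) ≤ (n:ℝ) := by exact_mod_cast hn3
  -- log n ≥ 1
  have hL1 : 1 ≤ Real.log n := by
    have he3 : Real.exp 1 ≤ 3 := by
      have := Real.exp_one_lt_d9; linarith
    calc (1:ℝ) = Real.log (Real.exp 1) := (Real.log_exp 1).symm
      _ ≤ Real.log n := Real.log_le_log (Real.exp_pos 1) (by linarith)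
  -- cast facts
  have hm1 : 1 ≤ m := by omega
  have hmr : (1:ℝ) ≤ (m:ℝ) := by exact_mod_cast hm1
  have hcast1 : ((m-1 : ℕ):ℝ) = (m:ℝ) - 1 := by
    push_cast [Nat.cast_sub hm1]; ring
  have hcast2 : ((m-2 : ℕ):ℝ) = (m:ℝ) - 2 := by
    push_cast [Nat.cast_sub hm]; ring
  have hexp1 : (m-1) + 1 = m := by omega
  have hexp2 : (m-2) + 1 = m-1 := by omega
  have hfact_pos : (0:ℝ) < (m.factorial : ℝ) := by exact_mod_cast m.factorial_pos
  have hfact1_pos : (0:ℝ) < ((m-1).factorial : ℝ) := by exact_mod_cast (m-1).factorial_pos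
  have hfact_ge1 : (1:ℝ) ≤ (m.factorial : ℝ) := by exact_mod_cast m.factorial_pos
  have hfact1_ge1 : (1:ℝ) ≤ ((m-1).factorial : ℝ) := by exact_mod_cast (m-1).factorial_pos
  have hfact_succ : ((m+1).factorial : ℝ) = ((m:ℝ)+1) * (m.factorial : ℝ) := by
    rw [Nat.factorial_succ]; push_cast; ring
  have hfact_pred : (m.factorial : ℝ) = (m:ℝ) * ((m-1).factorial : ℝ) := by
    conv_lhs => rw [show m = (m-1)+1 by omega, Nat.factorial_succ]
    push_cast [hcast1]
    ring
  -- decomposition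
  set T1 := ∑ k ∈ Finset.Icc 1 n, (Real.log k)^m / k with hT1def
  set T2 := ∑ k ∈ Finset.Icc 1 n, (Real.log k)^(m-1) / k with hT2def
  set T3 := ∑ k ∈ Finset.Icc 1 n, (Real.log k)^(m-2) / k with hT3def
  set R := ∑ k ∈ Finset.Icc 1 n, Em m k / k with hRdef
  have hdecomp : aa n (m+1) = T1/(m.factorial : ℝ) + γ * T2 / ((m-1).factorial : ℝ) + R := by
    rw [aa_rec, hT1def, hT2def, hRdef]
    simp only [Finset.mul_sum, Finset.sum_div, ← Finset.sum_add_distrib]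
    apply Finset.sum_congr rfl
    intro k hk
    have hk1 : 1 ≤ k := (Finset.mem_Icc.mp hk).1
    have hk0 : ((k:ℝ)) ≠ 0 := by positivity
    rw [Em]
    field_simp
    ring
  set L := Real.log n with hLdef
  have hEm : Em (m+1) n = (T1 - L^(m+1)/((m:ℝ)+1))/((m:ℝ) * ((m-1).factorial : ℝ))
      + γ * ((T2 - L^m/(m:ℝ))/((m-1).factorial : ℝ)) + R := by
    have hne1 : (m:ℝ) ≠ 0 := by positivity
    have hne2 : (m:ℝ)+1 ≠ 0 := by positivity
    have hne3 : (m.factorial:ℝ) ≠ 0 := ne_of_gt hfact_pos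
    have hne4 : (((m-1).factorial):ℝ) ≠ 0 := ne_of_gt hfact1_pos
    rw [Em, hdecomp]
    simp only [Nat.add_sub_cancel]
    rw [hfact_succ, hfact_pred]
    generalize hF : (((m-1).factorial : ℕ) : ℝ) = F at hne4 ⊢
    field_simp
    ring
  -- bounds
  have hb1 : |T1 - L^(m+1)/((m:ℝ)+1)| ≤ C2 := hS2 n hn1
  have hb2 : |T2 - L^m/(m:ℝ)| ≤ C3 := by
    have := hS3 n hn1
    rw [hexp1, hcast1] at this
    have he : (m:ℝ) - 1 + 1 = (m:ℝ) := by ring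
    rw [he] at this
    exact this
  have hb4 : |T3 - L^(m-1)/((m:ℝ)-1)| ≤ C4 := by
    have := hS4 n hn1
    rw [hexp2, hcast2] at this
    have he : (m:ℝ) - 2 + 1 = (m:ℝ) - 1 := by ring
    rw [he] at this
    exact this
  -- R bound
  have hsplitR : R = (∑ k ∈ Finset.Ioc 0 2, Em m k / k) + ∑ k ∈ Finset.Ioc 2 n, Em m k / k := by
    rw [hRdef, (by exact Finset.Icc_add_one_left_eq_Ioc 0 n : Finset.Icc 1 n = Finset.Ioc 0 n)]
    exact (Finset.sum_Ioc_consecutive _ (by omega) (by omega)).symm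
  have hT3term_nn : ∀ k ∈ Finset.Icc 1 n, (0:ℝ) ≤ (Real.log k)^(m-2) / k := by
    intro k hk
    have hk1 : 1 ≤ k := (Finset.mem_Icc.mp hk).1
    have hkr : (1:ℝ) ≤ (k:ℝ) := by exact_mod_cast hk1
    have := Real.log_nonneg hkr
    positivity
  have hRtail : |∑ k ∈ Finset.Ioc 2 n, Em m k / k| ≤ C * T3 := by
    calc |∑ k ∈ Finset.Ioc 2 n, Em m k / k|
        ≤ ∑ k ∈ Finset.Ioc 2 n, |Em m k / k| := Finset.abs_sum_le_sum_abs _ _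
      _ ≤ ∑ k ∈ Finset.Ioc 2 n, C * ((Real.log k)^(m-2) / k) := by
          apply Finset.sum_le_sum
          intro k hk
          obtain ⟨hk2, hkn⟩ := Finset.mem_Ioc.mp hk
          have hk3 : 3 ≤ k := by omega
          have hkpos : (0:ℝ) < (k:ℝ) := by exact_mod_cast (by omega : 0 < k)
          rw [abs_div, abs_of_pos hkpos, ← mul_div_assoc]
          gcongr
          exact hA k hk3
      _ ≤ ∑ k ∈ Finset.Icc 1 n, C * ((Real.log k)^(m-2) / k) := by
          apply Finset.sum_le_sum_of_subset_of_nonneg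
          · intro k hk
            obtain ⟨hk2, hkn⟩ := Finset.mem_Ioc.mp hk
            exact Finset.mem_Icc.mpr ⟨by omega, hkn⟩
          · intro k hk _
            exact mul_nonneg hC.le (hT3term_nn k hk)
      _ = C * T3 := by rw [hT3def, Finset.mul_sum]
  have hT3nn : 0 ≤ T3 := Finset.sum_nonneg hT3term_nn
  have hT3le : T3 ≤ L^(m-1) + C4 := by
    have h1 : T3 - L^(m-1)/((m:ℝ)-1) ≤ C4 := (abs_le.mp hb4).2
    have h2 : L^(m-1)/((m:ℝ)-1) ≤ L^(m-1) := by
      exact div_le_self (by positivity) (by linarith)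
    linarith
  have hRb : |R| ≤ B + C * (L^(m-1) + C4) := by
    rw [hsplitR]
    calc |(∑ k ∈ Finset.Ioc 0 2, Em m k / k) + ∑ k ∈ Finset.Ioc 2 n, Em m k / k|
        ≤ |∑ k ∈ Finset.Ioc 0 2, Em m k / k| + |∑ k ∈ Finset.Ioc 2 n, Em m k / k| := abs_add_le _ _
      _ ≤ B + C * T3 := by rw [← hB]; linarith [hRtail]
      _ ≤ B + C * (L^(m-1) + C4) := by
          have := mul_le_mul_of_nonneg_left hT3le hC.le
          linarith
  clear_value T1 T2 T3 R L B γ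
  -- assemble
  have hLp1 : (1:ℝ) ≤ L^(m-1) := by
    calc (1:ℝ) = 1^(m-1) := (one_pow _).symm
    _ ≤ L^(m-1) := by gcongr
  have hfinal : |Em (m+1) n| ≤ C2 + C3 + B + C * (L^(m-1) + C4) := by
    rw [hEm]
    calc |(T1 - L^(m+1)/((m:ℝ)+1))/((m:ℝ) * ((m-1).factorial : ℝ))
        + γ * ((T2 - L^m/(m:ℝ))/((m-1).factorial : ℝ)) + R|
        ≤ |(T1 - L^(m+1)/((m:ℝ)+1))/((m:ℝ) * ((m-1).factorial : ℝ))|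
          + |γ * ((T2 - L^m/(m:ℝ))/((m-1).factorial : ℝ))| + |R| := abs_add_three _ _ _
      _ ≤ C2 + C3 + (B + C * (L^(m-1) + C4)) := by
          have hmf_pos : (0:ℝ) < (m:ℝ) * ((m-1).factorial : ℝ) := by positivity
          have hmf_ge1 : (1:ℝ) ≤ (m:ℝ) * ((m-1).factorial : ℝ) :=
            one_le_mul_of_one_le_of_one_le hmr hfact1_ge1
          have e1 : |(T1 - L^(m+1)/((m:ℝ)+1))/((m:ℝ) * ((m-1).factorial : ℝ))|
              = |T1 - L^(m+1)/((m:ℝ)+1)| / ((m:ℝ) * ((m-1).factorial : ℝ)) := by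
            rw [abs_div, abs_of_pos hmf_pos]
          have e2 : |γ * ((T2 - L^m/(m:ℝ))/((m-1).factorial : ℝ))|
              = γ * (|T2 - L^m/(m:ℝ)| / ((m-1).factorial : ℝ)) := by
            rw [abs_mul, abs_div, abs_of_pos hγ0, abs_of_pos hfact1_pos]
          rw [e1, e2]
          have d1 : |T1 - L^(m+1)/((m:ℝ)+1)| / ((m:ℝ) * ((m-1).factorial : ℝ)) ≤ C2 :=
            le_trans (div_le_self (abs_nonneg _) hmf_ge1) hb1
          have d2 : γ * (|T2 - L^m/(m:ℝ)| / ((m-1).factorial : ℝ)) ≤ C3 := by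
            have hX : |T2 - L^m/(m:ℝ)| / ((m-1).factorial : ℝ) ≤ C3 :=
              le_trans (div_le_self (abs_nonneg _) hfact1_ge1) hb2
            have hXnn : 0 ≤ |T2 - L^m/(m:ℝ)| / ((m-1).factorial : ℝ) :=
              div_nonneg (abs_nonneg _) hfact1_pos.le
            calc γ * (|T2 - L^m/(m:ℝ)| / ((m-1).factorial : ℝ))
                ≤ 1 * (|T2 - L^m/(m:ℝ)| / ((m-1).factorial : ℝ)) :=
                  mul_le_mul_of_nonneg_right hγ1.le hXnn
              _ = |T2 - L^m/(m:ℝ)| / ((m-1).factorial : ℝ) := one_mul _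
              _ ≤ C3 := hX
          linarith [hRb]
      _ = C2 + C3 + B + C * (L^(m-1) + C4) := by ring
  calc |Em (m+1) n| ≤ C2 + C3 + B + C * (L^(m-1) + C4) := hfinal
    _ = (C2 + C3 + B + C*C4) + C * L^(m-1) := by ring
    _ ≤ (C2 + C3 + B + C*C4) * L^(m-1) + (C+1) * L^(m-1) := by
        have hLnn : (0:ℝ) ≤ L^(m-1) := by linarith
        have h1 : (C2 + C3 + B + C*C4) ≤ (C2 + C3 + B + C*C4) * L^(m-1) :=
          le_mul_of_one_le_right (by positivity) hLp1
        have h2 : C * L^(m-1) ≤ (C+1) * L^(m-1) :=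
          mul_le_mul_of_nonneg_right (by linarith) hLnn
        linarith
    _ = (C2 + C3 + B + C*C4 + C + 1) * L^(m-1) := by ring

lemma mainH : ∀ m : ℕ, 2 ≤ m → ∃ C : ℝ, 0 < C ∧ ∀ n : ℕ, 3 ≤ n →
    |Em m n| ≤ C * (Real.log n)^(m-2) := by
  intro m hm
  induction m, hm using Nat.le_induction with
  | base => exact base2
  | succ m hm ih =>
      obtain ⟨C, hC, hA⟩ := ih
      obtain ⟨C', hC', hA'⟩ := stepm m hm C hC hA
      refine ⟨C', hC', ?_⟩
      have he : m + 1 - 2 = m - 1 := by omega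
      rw [he]
      exact hA'

/-- For each fixed `m ≥ 2`,
`a(n,m) = (log n)^m / m! + γ (log n)^{m−1}/(m−1)! + O((log n)^{m−2})` as `n → ∞`,
where `a(n,m) = ∑_{k=1}^{n} C(n,k) (−1)^{k+1} / k^m` and `γ` is the Euler–Mascheroni
constant. -/
theorem alternating_binomial_sum_asymptotic_second_order
    (m : ℕ) (hm : 2 ≤ m) :
    ∃ C : ℝ, 0 < C ∧ ∃ N : ℕ, ∀ n : ℕ, N ≤ n →
      |(∑ k ∈ Finset.Icc 1 n, (n.choose k : ℝ) * (-1 : ℝ) ^ (k + 1) / (k : ℝ) ^ m)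
          - (Real.log n) ^ m / (m.factorial : ℝ)
          - Real.eulerMascheroniConstant * (Real.log n) ^ (m - 1) / ((m - 1).factorial : ℝ)|
        ≤ C * (Real.log n) ^ (m - 2) := by
  obtain ⟨C, hC, hA⟩ := mainH m hm
  refine ⟨C, hC, 3, fun n hn => ?_⟩
  have := hA n hn
  simpa only [Em, aa] using this
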